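/- Let p : Ω → ℝ be C² with W = √(1+p_x²+p_y²), and let q satisfy q_x = -p_y/W and q_y = p_x/W. If p solves the minimal surface equation, then q solves the dual (maximal surface) equation (1 - q_y²) q_xx + 2 q_x q_y q_xy + (1 - q_x²) q_yy = 0. -/

import Mathlib

noncomputable def pdx {E : Type*} [NormedAddCommGroup E] [NormedSpace ℝ E]
    (f : ℝ × ℝ → E) : ℝ × ℝ → E := fun p => fderiv ℝ f p (1, 0)

noncomputable def pdy {E : Type*} [NormedAddCommGroup E] [NormedSpace ℝ E]
    (f : ℝ × ℝ → E) : ℝ × ℝ → E := fun p => fderiv ℝ f p (0, 1)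

noncomputable def Ec (f g : ℝ × ℝ → ℝ) : ℝ × ℝ → ℝ :=
  fun p => 1 + (pdx f p) ^ 2 + (pdx g p) ^ 2

noncomputable def Fc (f g : ℝ × ℝ → ℝ) : ℝ × ℝ → ℝ :=
  fun p => pdx f p * pdy f p + pdx g p * pdy g p

noncomputable def Gc (f g : ℝ × ℝ → ℝ) : ℝ × ℝ → ℝ :=
  fun p => 1 + (pdy f p) ^ 2 + (pdy g p) ^ 2

noncomputable def om (f g : ℝ × ℝ → ℝ) : ℝ × ℝ → ℝ :=
  fun p => Real.sqrt (Ec f g p * Gc f g p - (Fc f g p) ^ 2)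

noncomputable def Wg (p : ℝ × ℝ → ℝ) : ℝ × ℝ → ℝ :=
  fun v => Real.sqrt (1 + (pdx p v) ^ 2 + (pdy p v) ^ 2)

/-- Auxiliary: the directional first partial of a `C²` function is differentiable,
with derivative given by the flipped second derivative. -/
lemma aux_hasFDerivAt_pd (f : ℝ × ℝ → ℝ) (v u : ℝ × ℝ) (h : ContDiffAt ℝ 2 f v) :
    HasFDerivAt (fun w => fderiv ℝ f w u) ((fderiv ℝ (fderiv ℝ f) v).flip u) v := by
  have hc : ContDiffAt ℝ 1 (fderiv ℝ f) v := h.fderiv_right (by norm_num)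
  have hd : HasFDerivAt (fderiv ℝ f) (fderiv ℝ (fderiv ℝ f) v) v :=
    (hc.differentiableAt one_ne_zero).hasFDerivAt
  simpa using hd.clm_apply (hasFDerivAt_const u v)

set_option maxHeartbeats 2000000 in
theorem stmt_6 (Ω : Set (ℝ × ℝ)) (hΩ : IsOpen Ω) (p q : ℝ × ℝ → ℝ)
    (hp : ContDiffOn ℝ 2 p Ω) (hq : ContDiffOn ℝ 2 q Ω)
    (hLag : ∀ v ∈ Ω, pdx q v = -pdy p v / Wg p v ∧ pdy q v = pdx p v / Wg p v)
    (hmse : ∀ v ∈ Ω,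
      pdx (fun w => pdx p w / Wg p w) v + pdy (fun w => pdy p w / Wg p w) v = 0) :
    ∀ v ∈ Ω,
      (1 - (pdy q v) ^ 2) * pdx (pdx q) v + 2 * pdx q v * pdy q v * pdy (pdx q) v +
        (1 - (pdx q v) ^ 2) * pdy (pdy q) v = 0 := by
  intro v hv
  have hmem : Ω ∈ nhds v := hΩ.mem_nhds hv
  have hp2 : ContDiffAt ℝ 2 p v := hp.contDiffAt hmem
  have hq2 : ContDiffAt ℝ 2 q v := hq.contDiffAt hmem
  have hWpos : ∀ w, 0 < Wg p w := fun w => Real.sqrt_pos.mpr (by positivity)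
  have hWne : ∀ w, Wg p w ≠ 0 := fun w => (hWpos w).ne'
  set da := (fderiv ℝ (fderiv ℝ p) v).flip ((1:ℝ),(0:ℝ)) with hda
  set db := (fderiv ℝ (fderiv ℝ p) v).flip ((0:ℝ),(1:ℝ)) with hdb
  have ha : HasFDerivAt (pdx p) da v := aux_hasFDerivAt_pd p v _ hp2
  have hb : HasFDerivAt (pdy p) db v := aux_hasFDerivAt_pd p v _ hp2
  set dc := (fderiv ℝ (fderiv ℝ q) v).flip ((1:ℝ),(0:ℝ)) with hdcq
  set dd := (fderiv ℝ (fderiv ℝ q) v).flip ((0:ℝ),(1:ℝ)) with hddq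
  have hcq : HasFDerivAt (pdx q) dc v := aux_hasFDerivAt_pd q v _ hq2
  have hdq : HasFDerivAt (pdy q) dd v := aux_hasFDerivAt_pd q v _ hq2
  set a := pdx p v with ha0
  set b := pdy p v with hb0
  set W := Wg p v with hW0
  have hWne' : W ≠ 0 := hWne v
  -- derivative of the function under the square root in `Wg`
  have hg : HasFDerivAt (fun w => 1 + (pdx p w) ^ 2 + (pdy p w) ^ 2)
      (((a • da + a • da) + (b • db + b • db))) v := by
    have h1 : HasFDerivAt (fun w => pdx p w * pdx p w) (a • da + a • da) v := ha.mul ha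
    have h2 : HasFDerivAt (fun w => pdy p w * pdy p w) (b • db + b • db) v := hb.mul hb
    have := (h1.const_add 1).add h2
    refine this.congr_of_eventuallyEq (Filter.Eventually.of_forall fun w => ?_)
    simp only [Pi.add_apply]
    ring
  set dW := ((1 / (2 * W)) • (((a • da + a • da) + (b • db + b • db))) : ℝ × ℝ →L[ℝ] ℝ) with hdW
  have hW : HasFDerivAt (Wg p) dW v := by
    have hne : 1 + (pdx p v) ^ 2 + (pdy p v) ^ 2 ≠ 0 := by positivity
    have := (Real.hasDerivAt_sqrt hne).comp_hasFDerivAt v hg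
    exact this
  -- key product identities coming from the Lagrange system
  have keyx : (pdx q v) • dW + W • dc = -db := by
    have heq : (fun w => pdx q w * Wg p w) =ᶠ[nhds v] (fun w => -pdy p w) := by
      filter_upwards [hmem] with w hw
      rw [(hLag w hw).1, div_mul_cancel₀]
      exact hWne w
    have h1 : fderiv ℝ (fun w => pdx q w * Wg p w) v = (pdx q v) • dW + W • dc :=
      (hcq.mul hW).fderiv
    have h2 : fderiv ℝ (fun w => -pdy p w) v = -db := hb.neg.fderiv
    rw [← h1, heq.fderiv_eq, h2]
  have keyy : (pdy q v) • dW + W • dd = da := by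
    have heq : (fun w => pdy q w * Wg p w) =ᶠ[nhds v] (fun w => pdx p w) := by
      filter_upwards [hmem] with w hw
      rw [(hLag w hw).2, div_mul_cancel₀]
      exact hWne w
    have h1 : fderiv ℝ (fun w => pdy q w * Wg p w) v = (pdy q v) • dW + W • dd :=
      (hdq.mul hW).fderiv
    rw [← h1, heq.fderiv_eq, ha.fderiv]
  set A1 := da ((1:ℝ),(0:ℝ)) with hA1
  set A2 := da ((0:ℝ),(1:ℝ)) with hA2
  set B1 := db ((1:ℝ),(0:ℝ)) with hB1
  set B2 := db ((0:ℝ),(1:ℝ)) with hB2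
  -- symmetry of second derivatives (Clairaut) for p and q
  have sp : A2 = B1 := (hp2.isSymmSndFDerivAt (by norm_num)).eq _ _
  have sq : dc ((0:ℝ),(1:ℝ)) = dd ((1:ℝ),(0:ℝ)) := (hq2.isSymmSndFDerivAt (by norm_num)).eq _ _
  set c1 := dc ((1:ℝ),(0:ℝ)) with hc1
  set c2 := dc ((0:ℝ),(1:ℝ)) with hc2
  set d1 := dd ((1:ℝ),(0:ℝ)) with hd1
  set d2 := dd ((0:ℝ),(1:ℝ)) with hd2
  set qx := pdx q v with hqx0
  set qy := pdy q v with hqy0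
  have hqx : qx = -b / W := (hLag v hv).1
  have hqy : qy = a / W := (hLag v hv).2
  have hWx : dW ((1:ℝ),(0:ℝ)) = (1/(2*W)) * (2*a*A1 + 2*b*B1) := by
    simp [hdW, hA1, hB1]; ring
  have hWy : dW ((0:ℝ),(1:ℝ)) = (1/(2*W)) * (2*a*A2 + 2*b*B2) := by
    simp [hdW, hA2, hB2]; ring
  have e1 : qx * ((1/(2*W)) * (2*a*A1 + 2*b*B1)) + W * c1 = -B1 := by
    have := congrArg (fun L : ℝ × ℝ →L[ℝ] ℝ => L ((1:ℝ),(0:ℝ))) keyx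
    simpa [hWx, hc1, hB1] using this
  have e2 : qx * ((1/(2*W)) * (2*a*A2 + 2*b*B2)) + W * c2 = -B2 := by
    have := congrArg (fun L : ℝ × ℝ →L[ℝ] ℝ => L ((0:ℝ),(1:ℝ))) keyx
    simpa [hWy, hc2, hB2] using this
  have e3 : qy * ((1/(2*W)) * (2*a*A1 + 2*b*B1)) + W * d1 = A1 := by
    have := congrArg (fun L : ℝ × ℝ →L[ℝ] ℝ => L ((1:ℝ),(0:ℝ))) keyy
    simpa [hWx, hd1, hA1] using this
  have e4 : qy * ((1/(2*W)) * (2*a*A2 + 2*b*B2)) + W * d2 = A2 := by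
    have := congrArg (fun L : ℝ × ℝ →L[ℝ] ℝ => L ((0:ℝ),(1:ℝ))) keyy
    simpa [hWy, hd2, hA2] using this
  rw [hqx] at e1 e2
  rw [hqy] at e3 e4
  clear_value da db dc dd dW a b W A1 A2 B1 B2 c1 c2 d1 d2 qx qy
  -- polynomial forms of the second-derivative equations
  have E1 : W^3 * c1 = b*(a*A1+b*B1) - B1*W^2 := by
    field_simp [hWne'] at e1; linarith
  have E2 : W^3 * c2 = b*(a*A2+b*B2) - B2*W^2 := by
    field_simp [hWne'] at e2; linarith
  have E3 : W^3 * d1 = A1*W^2 - a*(a*A1+b*B1) := by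
    field_simp [hWne'] at e3; linarith
  have E4 : W^3 * d2 = A2*W^2 - a*(a*A2+b*B2) := by
    field_simp [hWne'] at e4; linarith
  have hC : b*(a*A2+b*B2) - B2*W^2 = A1*W^2 - a*(a*A1+b*B1) := by
    linear_combination E3 - E2 + W^3 * sq
  -- reduce the goal to scalar form
  have g1 : pdx (pdx q) v = c1 := by
    show fderiv ℝ (pdx q) v ((1:ℝ),(0:ℝ)) = c1
    rw [hcq.fderiv, hc1]
  have g2 : pdy (pdx q) v = c2 := by
    show fderiv ℝ (pdx q) v ((0:ℝ),(1:ℝ)) = c2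
    rw [hcq.fderiv, hc2]
  have g3 : pdy (pdy q) v = d2 := by
    show fderiv ℝ (pdy q) v ((0:ℝ),(1:ℝ)) = d2
    rw [hdq.fderiv, hd2]
  show (1 - qy ^ 2) * pdx (pdx q) v + 2 * qx * qy * pdy (pdx q) v +
      (1 - qx ^ 2) * pdy (pdy q) v = 0
  rw [g1, g2, g3, hqx, hqy]
  have expand : (1 - (a/W) ^ 2) * c1 + 2 * (-b/W) * (a/W) * c2 + (1 - (-b/W) ^ 2) * d2
      = ((W^2 - a^2) * (W^3 * c1) - 2*a*b * (W^3 * c2) + (W^2 - b^2) * (W^3 * d2)) / W^5 := by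
    field_simp; ring
  rw [expand, E1, E2, E4, div_eq_zero_iff]
  left
  rw [sp] at hC ⊢
  linear_combination (-(a*b)) * hC
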